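/- For every ε > 0 there exists R > 0 such that every point z ∈ L₁ with |z| ≥ R satisfies dist(z, C) ≤ ε, where dist denotes the Euclidean distance from a point to a set in ℂ³. (That is, L₁ is asymptotic to the cone C at infinity.) -/

import Mathlib

open Complex

/-- The Harvey–Lawson cone `C ⊆ ℂ³` (Euclidean `ℂ³`). -/
noncomputable def HLconeE : Set (EuclideanSpace ℂ (Fin 3)) :=
  {z | z ≠ 0 ∧ ‖z 0‖ = ‖z 1‖ ∧
    ‖z 1‖ = ‖z 2‖ ∧
    (z 0 * z 1 * z 2).im = 0 ∧ 0 < (z 0 * z 1 * z 2).re}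

/-- The local model `L₁ ⊆ ℂ³` (Euclidean `ℂ³`). -/
noncomputable def LoneE : Set (EuclideanSpace ℂ (Fin 3)) :=
  {z | normSq (z 0) - 1 = normSq (z 1) ∧ normSq (z 1) = normSq (z 2) ∧
    (z 0 * z 1 * z 2).im = 0 ∧ 0 ≤ (z 0 * z 1 * z 2).re}

set_option maxHeartbeats 1000000 in
/-- `L₁` is asymptotic to the cone `C` at infinity: for every
`ε > 0` there exists `R > 0` such that every point `z ∈ L₁` with `|z| ≥ R` satisfies
`dist(z, C) ≤ ε`, the Euclidean distance from a point to a set in `ℂ³`. -/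
theorem Lone_asymptotic_to_cone :
    ∀ ε > (0 : ℝ), ∃ R > (0 : ℝ), ∀ z ∈ LoneE, R ≤ ‖z‖ →
      Metric.infDist z HLconeE ≤ ε := by
  intro ε hε
  set M : ℝ := max 1 (1 / (2 * ε)) with hMdef
  have hM1 : (1 : ℝ) ≤ M := le_max_left _ _
  have hM2 : 1 / (2 * ε) ≤ M := le_max_right _ _
  have hM0 : (0 : ℝ) < M := lt_of_lt_of_le one_pos hM1
  refine ⟨Real.sqrt (3 * M ^ 2 + 1), Real.sqrt_pos.mpr (by positivity), ?_⟩
  intro z hz hzR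
  obtain ⟨h1, h2, h3, h4⟩ := hz
  set r : ℝ := ‖z 1‖ with hrdef
  have hr0 : 0 ≤ r := norm_nonneg _
  have hr2 : r ^ 2 = normSq (z 1) := Complex.sq_norm _
  -- ‖z‖² = 3r² + 1
  have hnorm : ‖z‖ ^ 2 = 3 * r ^ 2 + 1 := by
    have heq := EuclideanSpace.norm_eq z
    have hnn : (0:ℝ) ≤ ∑ i, ‖z i‖ ^ 2 := Finset.sum_nonneg fun i _ => sq_nonneg _
    rw [heq, Real.sq_sqrt hnn, Fin.sum_univ_three]
    have e0 : ‖z 0‖ ^ 2 = normSq (z 0) := by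
      rw [Complex.sq_norm]
    have e1 : ‖z 1‖ ^ 2 = normSq (z 1) := by
      rw [Complex.sq_norm]
    have e2 : ‖z 2‖ ^ 2 = normSq (z 2) := by
      rw [Complex.sq_norm]
    rw [e0, e1, e2, ← h2, ← hr2]
    nlinarith [h1, hr2]
  have hMr : M ≤ r := by
    have h : 3 * M ^ 2 + 1 ≤ ‖z‖ ^ 2 := by
      rw [← Real.sq_sqrt (show (0:ℝ) ≤ 3 * M ^ 2 + 1 by positivity)]
      exact pow_le_pow_left₀ (Real.sqrt_nonneg _) hzR 2
    nlinarith [hnorm]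
  have hrpos : 0 < r := lt_of_lt_of_le hM0 hMr
  set s : ℝ := Real.sqrt (r ^ 2 + 1) with hsdef
  have hs_sq : s ^ 2 = r ^ 2 + 1 := Real.sq_sqrt (by positivity)
  have hs_pos : 0 < s := Real.sqrt_pos.mpr (by positivity)
  have hrs : r ≤ s := by nlinarith [hs_sq, hs_pos]
  have habs0 : ‖z 0‖ = s := by
    rw [Complex.norm_def, hsdef]
    congr 1
    nlinarith [h1, hr2]
  have hz0ne : z 0 ≠ 0 := by
    intro h
    rw [h, norm_zero] at habs0
    exact absurd habs0.symm (ne_of_gt hs_pos)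
  have hz1ne : z 1 ≠ 0 := by
    intro h
    rw [hrdef, h, norm_zero] at hrpos
    exact lt_irrefl _ hrpos
  have habs2 : ‖z 2‖ = r := by
    rw [Complex.norm_def, hrdef, Complex.norm_def, ← h2]
  have hz2ne : z 2 ≠ 0 := by
    intro h
    rw [h, norm_zero] at habs2
    exact absurd habs2.symm (ne_of_gt hrpos)
  set c : ℝ := r / s with hcdef
  have hc_pos : 0 < c := div_pos hrpos hs_pos
  have hc_le : c ≤ 1 := (div_le_one hs_pos).mpr hrs
  set w : EuclideanSpace ℂ (Fin 3) :=
    WithLp.toLp 2 (fun i => if i = 0 then (c : ℂ) * z 0 else z i) with hwdef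
  have hw0 : w 0 = (c : ℂ) * z 0 := rfl
  have hw1 : w 1 = z 1 := rfl
  have hw2 : w 2 = z 2 := rfl
  -- product positivity
  have hpre : 0 < (z 0 * z 1 * z 2).re := by
    rcases lt_or_eq_of_le h4 with h | h
    · exact h
    · exfalso
      have hp : z 0 * z 1 * z 2 = 0 := by
        apply Complex.ext
        · exact h.symm
        · exact h3
      have := mul_ne_zero (mul_ne_zero hz0ne hz1ne) hz2ne
      exact this hp
  have hwmem : w ∈ HLconeE := by
    refine ⟨?_, ?_, ?_, ?_, ?_⟩
    · intro h
      have : w 1 = 0 := by rw [h]; rfl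
      rw [hw1] at this
      exact hz1ne this
    · rw [hw0, hw1, norm_mul, Complex.norm_real, Real.norm_eq_abs, habs0,
        abs_of_pos hc_pos, ← hrdef, hcdef]
      field_simp
    · rw [hw1, hw2, habs2]
    · rw [hw0, hw1, hw2]
      have : (c : ℂ) * z 0 * z 1 * z 2 = (c : ℂ) * (z 0 * z 1 * z 2) := by ring
      rw [this]
      simp [Complex.mul_im, h3]
    · rw [hw0, hw1, hw2]
      have : (c : ℂ) * z 0 * z 1 * z 2 = (c : ℂ) * (z 0 * z 1 * z 2) := by ring
      rw [this]
      have hre : ((c : ℂ) * (z 0 * z 1 * z 2)).re = c * (z 0 * z 1 * z 2).re := by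
        simp [Complex.mul_re]
      rw [hre]
      exact mul_pos hc_pos hpre
  have hdist : dist z w = s - r := by
    rw [EuclideanSpace.dist_eq, Fin.sum_univ_three, hw0, hw1, hw2,
      dist_self, dist_self]
    have hd0 : dist (z 0) ((c : ℂ) * z 0) = s - r := by
      rw [Complex.dist_eq]
      have : z 0 - (c : ℂ) * z 0 = (1 - (c : ℂ)) * z 0 := by ring
      rw [this, norm_mul, habs0]
      have : ‖1 - (c : ℂ)‖ = 1 - c := by
        rw [show (1 : ℂ) - (c : ℂ) = ((1 - c : ℝ) : ℂ) by push_cast; ring,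
          Complex.norm_real, Real.norm_eq_abs]
        exact abs_of_nonneg (by linarith)
      rw [this, hcdef]
      field_simp
    rw [hd0]
    simp only [ne_eq, OfNat.ofNat_ne_zero, not_false_eq_true, zero_pow, add_zero]
    rw [Real.sqrt_sq (by linarith)]
  have hfinal : s - r ≤ ε := by
    have hprod : (s - r) * (s + r) = 1 := by nlinarith [hs_sq]
    have h2eM : 1 ≤ 2 * ε * M := by
      rw [div_le_iff₀ (by positivity)] at hM2
      linarith [hM2]
    nlinarith [hprod, h2eM, hMr, hrs, hε, hM0, mul_le_mul_of_nonneg_left hMr hε.le,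
      mul_le_mul_of_nonneg_left (le_trans hMr hrs) hε.le]
  calc Metric.infDist z HLconeE ≤ dist z w := Metric.infDist_le_dist_of_mem hwmem
    _ = s - r := hdist
    _ ≤ ε := hfinal
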